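/- arXiv:2512.23266 — 3 statements merged into one kernel-verified Lean document; each statement's English description precedes it below -/
import Mathlib

section
/- Let E_1,...,E_ℓ be i.i.d. exponential random variables with mean 1, and let E_(1) > E_(2) > ... > E_(ℓ) be their decreasing order statistics. Then for any k ∈ {1,...,ℓ}, the expectation E[∑_{i=1}^k E_(i)] ≤ k + k·ln(ℓ/k). -/
open MeasureTheory ProbabilityTheory Real Set Filter

lemma aux_pdf (x : ℝ) :
    exponentialPDFReal 1 x = if 0 ≤ x then Real.exp (-x) else 0 := by
  simp [exponentialPDFReal, gammaPDFReal, Real.Gamma_one]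

lemma aux_density : expMeasure 1 =
    volume.withDensity (fun x => ((exponentialPDFReal 1 x).toNNReal : ENNReal)) := rfl

lemma aux_int (g : ℝ → ℝ) :
    ∫ x, g x ∂(expMeasure 1) = ∫ x, exponentialPDFReal 1 x * g x := by
  rw [aux_density, integral_withDensity_eq_integral_smul
    ((measurable_exponentialPDFReal 1).real_toNNReal)]
  congr 1; ext x
  rw [NNReal.smul_def, Real.coe_toNNReal _ (exponentialPDFReal_nonneg one_pos x), smul_eq_mul]

lemma aux_deriv (t : ℝ) (x : ℝ) :
    HasDerivAt (fun y => -(y - t + 1) * Real.exp (-y)) ((x - t) * Real.exp (-x)) x := by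
  have h1 : HasDerivAt (fun y : ℝ => -(y - t + 1)) (-1) x := by
    exact (((hasDerivAt_id x).sub_const t).add_const 1).neg
  have h2 : HasDerivAt (fun y : ℝ => Real.exp (-y)) (Real.exp (-x) * (-1)) x :=
    ((hasDerivAt_id x).neg).exp
  exact (h1.mul h2).congr_deriv (by ring)

lemma aux_tendsto (t : ℝ) :
    Tendsto (fun y => -(y - t + 1) * Real.exp (-y)) atTop (nhds 0) := by
  have h1 : Tendsto (fun y : ℝ => y * Real.exp (-y)) atTop (nhds 0) := by
    simpa using Real.tendsto_pow_mul_exp_neg_atTop_nhds_zero 1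
  have h2 : Tendsto (fun y : ℝ => Real.exp (-y)) atTop (nhds 0) :=
    Real.tendsto_exp_neg_atTop_nhds_zero
  have := (h1.add (h2.const_mul (1 - t))).neg
  simp only [add_zero, neg_zero, mul_zero, zero_add] at this
  convert this using 2 with y
  ring

lemma aux_IoiInt (t : ℝ) :
    IntegrableOn (fun x => (x - t) * Real.exp (-x)) (Ioi t) ∧
    ∫ x in Ioi t, (x - t) * Real.exp (-x) = Real.exp (-t) := by
  have hc : ContinuousWithinAt (fun y => -(y - t + 1) * Real.exp (-y)) (Ici t) t :=
    (Continuous.continuousWithinAt (by fun_prop))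
  have hd : ∀ x ∈ Ioi t, HasDerivAt (fun y => -(y - t + 1) * Real.exp (-y))
      ((x - t) * Real.exp (-x)) x := fun x _ => aux_deriv t x
  have hpos : ∀ x ∈ Ioi t, 0 ≤ (x - t) * Real.exp (-x) := fun x hx =>
    mul_nonneg (by simpa using (le_of_lt hx)) (Real.exp_pos _).le
  refine ⟨integrableOn_Ioi_deriv_of_nonneg hc hd hpos (aux_tendsto t), ?_⟩
  rw [integral_Ioi_of_hasDerivAt_of_nonneg hc hd hpos (aux_tendsto t)]
  simp

lemma aux_indicator (t : ℝ) (ht : 0 ≤ t) :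
    (fun x => exponentialPDFReal 1 x * max (x - t) 0)
      = Set.indicator (Ioi t) (fun x => (x - t) * Real.exp (-x)) := by
  funext x
  rcases lt_or_ge t x with h | h
  · rw [Set.indicator_of_mem (show x ∈ Ioi t from h), aux_pdf, if_pos (le_trans ht h.le),
      max_eq_left (by linarith)]
    ring
  · rw [Set.indicator_of_notMem (by simpa using h), max_eq_right (by linarith), mul_zero]

lemma aux_key (t : ℝ) (ht : 0 ≤ t) :
    Integrable (fun x => max (x - t) 0) (expMeasure 1) ∧
    ∫ x, max (x - t) 0 ∂(expMeasure 1) = Real.exp (-t) := by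
  have hmeas : Measurable fun x : ℝ => max (x - t) 0 := by fun_prop
  have hint : Integrable (fun x => exponentialPDFReal 1 x * max (x - t) 0) := by
    rw [aux_indicator t ht]
    exact (integrable_indicator_iff measurableSet_Ioi).mpr (aux_IoiInt t).1
  constructor
  · rw [aux_density, integrable_withDensity_iff_integrable_smul
      ((measurable_exponentialPDFReal 1).real_toNNReal)]
    apply hint.congr
    filter_upwards with x
    rw [NNReal.smul_def, Real.coe_toNNReal _ (exponentialPDFReal_nonneg one_pos x), smul_eq_mul]
  · rw [aux_int, aux_indicator t ht, integral_indicator measurableSet_Ioi, (aux_IoiInt t).2]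

lemma aux_ae_nonneg : ∀ᵐ x ∂(expMeasure 1), 0 ≤ x := by
  rw [ae_iff]
  have : {x : ℝ | ¬ 0 ≤ x} = Iio 0 := by ext x; simp
  rw [this, aux_density, withDensity_apply _ measurableSet_Iio]
  have := lintegral_gammaPDF_of_nonpos (a := 1) (r := 1) (le_refl (0:ℝ))
  simpa [gammaPDF, exponentialPDFReal, ENNReal.ofReal] using this

lemma aux_id_int : Integrable (fun x : ℝ => x) (expMeasure 1) := by
  apply (aux_key 0 le_rfl).1.congr
  filter_upwards [aux_ae_nonneg] with x hx
  simp [max_eq_left, hx]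

lemma aux_sup'_int {Ω ι : Type*} [MeasurableSpace Ω] {μ : Measure Ω} (s : Finset ι)
    (hs : s.Nonempty) (f : ι → Ω → ℝ) :
    (∀ i ∈ s, Integrable (f i) μ) →
      Integrable (fun ω => s.sup' hs fun i => f i ω) μ := by
  induction hs using Finset.Nonempty.cons_induction with
  | singleton a => intro h; simpa using h a (by simp)
  | cons a s ha hs ih =>
    intro h
    refine ((h a (by simp)).sup (ih fun i hi => h i (by simp [hi]))).congr ?_
    filter_upwards with ω
    exact (Finset.sup'_cons hs (fun i => f i ω)).symm

/-- Sum of the `k` largest among `E_1, ..., E_ℓ` i.i.d. exponential(1) random variables has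
expectation at most `k + k · ln(ℓ/k)`.  The sum of the `k` largest values is expressed as the
maximum, over all subsets `s` of cardinality `k`, of the sum over `s`. -/
theorem stmt0 {Ω : Type*} [MeasurableSpace Ω] (μ : Measure Ω) [IsProbabilityMeasure μ]
    (ℓ k : ℕ) (hk : 1 ≤ k) (hkℓ : k ≤ ℓ)
    (E : Fin ℓ → Ω → ℝ) (hmeas : ∀ i, Measurable (E i))
    (hindep : iIndepFun E μ)
    (hlaw : ∀ i, μ.map (E i) = expMeasure 1)
    (hne : (Finset.powersetCard k (Finset.univ : Finset (Fin ℓ))).Nonempty) :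
    ∫ ω, (Finset.powersetCard k (Finset.univ : Finset (Fin ℓ))).sup'
        hne (fun s => ∑ i ∈ s, E i ω) ∂μ
      ≤ k + k * Real.log (ℓ / k) := by
  have hk' : (1:ℝ) ≤ (k:ℝ) := by exact_mod_cast hk
  have hℓk : (k:ℝ) ≤ (ℓ:ℝ) := by exact_mod_cast hkℓ
  have hkpos : (0:ℝ) < k := by linarith
  have hℓpos : (0:ℝ) < ℓ := by linarith
  set t : ℝ := Real.log (ℓ / k) with hts
  have ht : 0 ≤ t := Real.log_nonneg ((one_le_div hkpos).mpr hℓk)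
  have hexp : Real.exp (-t) = k / ℓ := by
    rw [hts, Real.exp_neg, Real.exp_log (by positivity), inv_div]
  -- integrability of each E i and each truncation
  have hgmeas : ∀ s : ℝ, Measurable fun x : ℝ => max (x - s) 0 := fun s => by fun_prop
  have hEi : ∀ i, Integrable (E i) μ := by
    intro i
    have := (integrable_map_measure (μ := μ) (f := E i)
      (g := fun x : ℝ => x) measurable_id.aestronglyMeasurable (hmeas i).aemeasurable)
    rw [hlaw i] at this
    exact this.mp aux_id_int
  have hfi : ∀ i, Integrable (fun ω => max (E i ω - t) 0) μ := by
    intro i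
    have := (integrable_map_measure (μ := μ) (f := E i)
      (g := fun x : ℝ => max (x - t) 0) (hgmeas t).aestronglyMeasurable (hmeas i).aemeasurable)
    rw [hlaw i] at this
    exact this.mp (aux_key t ht).1
  have hfival : ∀ i, ∫ ω, max (E i ω - t) 0 ∂μ = Real.exp (-t) := by
    intro i
    have := integral_map (μ := μ) (φ := E i) (f := fun x : ℝ => max (x - t) 0)
      (hmeas i).aemeasurable (hgmeas t).aestronglyMeasurable
    rw [hlaw i, (aux_key t ht).2] at this
    exact this.symm
  -- the dominating function
  set g : Ω → ℝ := fun ω => k * t + ∑ i, max (E i ω - t) 0 with hg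
  have hgint : Integrable g μ :=
    (integrable_const _).add (integrable_finset_sum _ fun i _ => hfi i)
  have hptw : ∀ ω, (Finset.powersetCard k (Finset.univ : Finset (Fin ℓ))).sup'
      hne (fun s => ∑ i ∈ s, E i ω) ≤ g ω := by
    intro ω
    apply Finset.sup'_le
    intro s hsmem
    have hcard : s.card = k := (Finset.mem_powersetCard_univ.mp hsmem)
    calc ∑ i ∈ s, E i ω ≤ ∑ i ∈ s, (t + max (E i ω - t) 0) := by
          apply Finset.sum_le_sum
          intro i _
          have := le_max_left (E i ω - t) 0
          linarith
      _ = s.card * t + ∑ i ∈ s, max (E i ω - t) 0 := by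
          rw [Finset.sum_add_distrib, Finset.sum_const, nsmul_eq_mul]
      _ ≤ k * t + ∑ i, max (E i ω - t) 0 := by
          rw [hcard]
          exact add_le_add_right (Finset.sum_le_sum_of_subset_of_nonneg
            (Finset.subset_univ s) (fun i _ _ => le_max_right _ _)) _
  have hsupint : Integrable (fun ω => (Finset.powersetCard k
      (Finset.univ : Finset (Fin ℓ))).sup' hne (fun s => ∑ i ∈ s, E i ω)) μ :=
    aux_sup'_int _ hne _ (fun s _ => integrable_finset_sum _ fun i _ => hEi i)
  have hgval : ∫ ω, g ω ∂μ = k * t + ℓ * Real.exp (-t) := by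
    rw [hg]
    rw [integral_add (integrable_const _) (integrable_finset_sum _ fun i _ => hfi i),
      integral_const, integral_finset_sum _ fun i _ => hfi i]
    simp [hfival, measure_univ, mul_comm]
  calc ∫ ω, (Finset.powersetCard k (Finset.univ : Finset (Fin ℓ))).sup'
        hne (fun s => ∑ i ∈ s, E i ω) ∂μ ≤ ∫ ω, g ω ∂μ :=
        integral_mono hsupint hgint hptw
    _ = k * t + ℓ * Real.exp (-t) := hgval
    _ = k + k * t := by rw [hexp]; field_simp; ring
    _ = k + k * Real.log (ℓ / k) := by rw [hts]
end

section
/- Fix a counting-measure domination order: for finite point configurations μ = {x_1 ≤ ... ≤ x_p} and ν = {y_1 ≤ ... ≤ y_q} on ℝ, write μ ≻ ν if p ≤ q and x_i ≥ y_i for all i ≤ p. Suppose μ ≻ ν, each point z of μ and the corresponding point z' ≤ z of ν both give offspring z + Ξ and z' + Ξ' with Ξ, Ξ' copies of the same point process, coupled so that the same realization Ξ is used for matched points. If from ν's offspring one keeps only the N leftmost points (configuration ν̂), and from μ's offspring one keeps an arbitrary subset μ̂ with at most N points, then μ̂ ≻ ν̂. -/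
/-- The sorted (nondecreasing) list of a finite multiset of reals. -/
noncomputable def msort (A : Multiset ℝ) : List ℝ :=
  Multiset.sort A (· ≤ ·)

/-- Domination order on finite point configurations: `Dom A B` holds iff `A` has at most as
many points as `B` and the `i`-th smallest point of `A` is `≥` the `i`-th smallest point
of `B`, for every `i < card A`. -/
def Dom (A B : Multiset ℝ) : Prop :=
  Multiset.card A ≤ Multiset.card B ∧
    ∀ i : ℕ, i < Multiset.card A → (msort B).getD i 0 ≤ (msort A).getD i 0

private lemma rel_refl_aux {r : ℝ → ℝ → Prop} (s : Multiset ℝ) (h : ∀ a ∈ s, r a a) :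
    Multiset.Rel r s s := by
  induction s using Multiset.induction with
  | empty => exact Multiset.Rel.zero
  | cons a t ih =>
      exact Multiset.Rel.cons (h a (Multiset.mem_cons_self a t))
        (ih fun b hb => h b (Multiset.mem_cons_of_mem hb))

private lemma countP_le_of_rel {A B : Multiset ℝ}
    (h : Multiset.Rel (fun a b => b ≤ a) A B) (t : ℝ) :
    A.countP (fun z => z ≤ t) ≤ B.countP (fun z => z ≤ t) := by
  induction h with
  | zero => simp
  | @cons a b as bs hab _ ih =>
      rw [Multiset.countP_cons, Multiset.countP_cons]
      by_cases hat : a ≤ t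
      · have : b ≤ t := le_trans hab hat
        simp [hat, this]; omega
      · simp only [hat, if_false]
        by_cases hbt : b ≤ t <;> simp [hbt] <;> omega

/-- first i+1 elements of a sorted list are `≤` its i-th element. -/
private lemma countP_ge_of_sorted (l : List ℝ) (hl : l.Pairwise (· ≤ ·)) (i : ℕ)
    (hi : i < l.length) :
    i + 1 ≤ l.countP (fun z => decide (z ≤ l.getD i 0)) := by
  have hsub : (l.take (i+1)).countP (fun z => decide (z ≤ l.getD i 0))
      ≤ l.countP (fun z => decide (z ≤ l.getD i 0)) :=
    (List.take_sublist _ _).countP_le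
  have hall : (l.take (i+1)).countP (fun z => decide (z ≤ l.getD i 0))
      = (l.take (i+1)).length := by
    rw [List.countP_eq_length]
    intro a ha
    obtain ⟨j, hj, rfl⟩ := List.mem_iff_getElem.1 ha
    have hj' : j < i + 1 := lt_of_lt_of_le hj (by simp [List.length_take])
    rw [List.getElem_take, List.getD_eq_getElem l 0 hi]
    simp only [decide_eq_true_eq]
    exact hl.rel_get_of_le (a := ⟨j, by omega⟩) (b := ⟨i, hi⟩) (by simpa using Nat.lt_succ_iff.1 hj')
  have hlen : (l.take (i+1)).length = i + 1 := by simp [List.length_take]; omega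
  omega

private lemma getD_le_of_countP (l : List ℝ) (hl : l.Pairwise (· ≤ ·)) (i : ℕ) (t : ℝ)
    (h : i < l.countP (fun z => decide (z ≤ t))) : l.getD i 0 ≤ t := by
  have hi : i < l.length := lt_of_lt_of_le h List.countP_le_length
  by_contra hlt
  push_neg at hlt
  have hsplit : l.countP (fun z => decide (z ≤ t))
      = (l.take i).countP (fun z => decide (z ≤ t))
        + (l.drop i).countP (fun z => decide (z ≤ t)) := by
    conv_lhs => rw [← List.take_append_drop i l]
    rw [List.countP_append]
  have hdrop : (l.drop i).countP (fun z => decide (z ≤ t)) = 0 := by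
    rw [List.countP_eq_zero]
    intro a ha
    obtain ⟨j, hj, rfl⟩ := List.mem_iff_getElem.1 ha
    rw [List.getElem_drop]
    simp only [decide_eq_true_eq, not_le]
    have hij : i + j < l.length := by
      have := hj; rw [List.length_drop] at this; omega
    have : l.getD i 0 ≤ l[i + j] := by
      rw [List.getD_eq_getElem l 0 hi]
      exact hl.rel_get_of_le (a := ⟨i, hi⟩) (b := ⟨i + j, hij⟩) (by simp)
    linarith
  have htake : (l.take i).countP (fun z => decide (z ≤ t)) ≤ i :=
    le_trans List.countP_le_length (by simp [List.length_take])
  omega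

/-- msort and countP: the multiset countP equals the list countP of the sort. -/
private lemma countP_msort (A : Multiset ℝ) (t : ℝ) :
    (msort A).countP (fun z => decide (z ≤ t)) = A.countP (fun z => z ≤ t) := by
  conv_rhs => rw [← Multiset.sort_eq (s := A) (r := (· ≤ ·))]
  rw [Multiset.coe_countP]
  rfl

private lemma msort_sorted (A : Multiset ℝ) : (msort A).Pairwise (· ≤ ·) :=
  Multiset.pairwise_sort (s := A) (r := (· ≤ ·))

private lemma length_msort (A : Multiset ℝ) : (msort A).length = Multiset.card A :=
  Multiset.length_sort _

/-- Master comparison: countP domination gives pointwise sorted domination. -/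
private lemma getD_le_of_countP_le (A B : Multiset ℝ)
    (hc : ∀ t : ℝ, A.countP (fun z => z ≤ t) ≤ B.countP (fun z => z ≤ t))
    (i : ℕ) (hi : i < Multiset.card A) :
    (msort B).getD i 0 ≤ (msort A).getD i 0 := by
  set t := (msort A).getD i 0 with ht
  have h1 : i + 1 ≤ (msort A).countP (fun z => decide (z ≤ t)) :=
    countP_ge_of_sorted _ (msort_sorted A) i (by rw [length_msort]; exact hi)
  have h2 : i < (msort B).countP (fun z => decide (z ≤ t)) := by
    rw [countP_msort]
    calc i < (msort A).countP (fun z => decide (z ≤ t)) := h1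
    _ = A.countP (fun z => z ≤ t) := countP_msort A t
    _ ≤ B.countP (fun z => z ≤ t) := hc t
  exact getD_le_of_countP _ (msort_sorted B) i t h2

private lemma rel_sum {ι : Type*} (s : Finset ι) (f g : ι → Multiset ℝ)
    (r : ℝ → ℝ → Prop) (h : ∀ i ∈ s, Multiset.Rel r (f i) (g i)) :
    Multiset.Rel r (∑ i ∈ s, f i) (∑ i ∈ s, g i) := by
  classical
  induction s using Finset.induction with
  | empty => simp [Multiset.Rel.zero]
  | @insert a s ha ih =>
      rw [Finset.sum_insert ha, Finset.sum_insert ha]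
      exact (h a (Finset.mem_insert_self a s)).add
        (ih fun i hi => h i (Finset.mem_insert_of_mem hi))


/-- One-step monotonicity of the `N`-selection branching mechanism: if the configuration
`x` (sorted, `p` points) dominates `y` (sorted, `q ≥ p` points) pointwise, each matched pair
of points uses the same offspring displacement realization `Ξ i`, `ν̂` consists of the `N`
leftmost offspring of `y`, and `μ̂` is an arbitrary sub-multiset of the offspring of `x`
with at most `N` points, then `μ̂` dominates `ν̂`. -/
theorem stmt18 (p q N : ℕ) (hpq : p ≤ q)
    (x : Fin p → ℝ) (y : Fin q → ℝ) (hx : Monotone x) (hy : Monotone y)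
    (hdom : ∀ i : Fin p, y (Fin.castLE hpq i) ≤ x i)
    (Ξ : Fin q → Multiset ℝ)
    (Mhat Nhat : Multiset ℝ)
    (hNhat : Nhat = ((msort (∑ i : Fin q, (Ξ i).map (fun z => y i + z))).take N : List ℝ))
    (hMhat : Mhat ≤ ∑ i : Fin p, (Ξ (Fin.castLE hpq i)).map (fun z => x i + z))
    (hcard : Multiset.card Mhat ≤ N) :
    Dom Mhat Nhat := by
  classical
  set Sy : Multiset ℝ := ∑ i : Fin q, (Ξ i).map (fun z => y i + z) with hSy
  set Sx : Multiset ℝ := ∑ i : Fin p, (Ξ (Fin.castLE hpq i)).map (fun z => x i + z) with hSx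
  set Sy' : Multiset ℝ := ∑ i : Fin p, (Ξ (Fin.castLE hpq i)).map (fun z => y (Fin.castLE hpq i) + z) with hSy'
  -- Rel between Sx and Sy'
  have hrel : Multiset.Rel (fun a b => b ≤ a) Sx Sy' := by
    apply rel_sum
    intro i _
    rw [Multiset.rel_map]
    exact rel_refl_aux _ (fun a _ => by have := hdom i; linarith)
  -- Sy' ≤ Sy
  have hsub : Sy' ≤ Sy := by
    have : Sy' = ∑ j ∈ Finset.univ.map (Fin.castLEEmb hpq), (Ξ j).map (fun z => y j + z) := by
      rw [Finset.sum_map]; rfl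
    rw [this, hSy]
    exact Finset.sum_le_sum_of_subset (Finset.subset_univ _)
  -- split Rel along Mhat ≤ Sx
  obtain ⟨C, hC⟩ := Multiset.le_iff_exists_add.1 hMhat
  rw [hC] at hrel
  obtain ⟨B0, B1, hrel0, _, hB⟩ := Multiset.rel_add_left.1 hrel
  have hB0le : B0 ≤ Sy := le_trans (le_trans (Multiset.le_iff_exists_add.2 ⟨B1, hB⟩) le_rfl) hsub
  -- countP chain
  have hcount : ∀ t : ℝ, Mhat.countP (fun z => z ≤ t) ≤ Sy.countP (fun z => z ≤ t) := by
    intro t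
    exact le_trans (countP_le_of_rel hrel0 t) (Multiset.countP_le_of_le _ hB0le)
  have hcardB : Multiset.card Mhat ≤ Multiset.card Sy := by
    rw [Multiset.card_eq_card_of_rel hrel0]
    exact Multiset.card_le_card hB0le
  -- msort Nhat
  have hsortN : msort Nhat = (msort Sy).take N := by
    rw [hNhat]
    refine List.Perm.eq_of_pairwise' (msort_sorted _) ?_ (Multiset.coe_eq_coe.1 (Multiset.sort_eq _ _))
    exact (msort_sorted Sy).sublist (List.take_sublist _ _)
  have hcardN : Multiset.card Nhat = min N (Multiset.card Sy) := by
    rw [← length_msort, hsortN, List.length_take, length_msort]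
  constructor
  · rw [hcardN]; exact le_min hcard hcardB
  · intro i hi
    have hiN : i < N := lt_of_lt_of_le hi hcard
    have hiSy : i < Multiset.card Sy := lt_of_lt_of_le hi hcardB
    have h1 : (msort Nhat).getD i 0 = (msort Sy).getD i 0 := by
      rw [hsortN]
      have hlt : i < ((msort Sy).take N).length := by
        rw [List.length_take, length_msort]; omega
      rw [List.getD_eq_getElem _ 0 hlt, List.getD_eq_getElem _ 0 (by rw [length_msort]; exact hiSy)]
      exact List.getElem_take
    rw [h1]
    exact getD_le_of_countP_le Mhat Sy hcount i hi
end

section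
/- Let (Y_j) be a centered random walk with steps Exp(1) − 1, started at 0. For r < 0, let τ be the first exit time of Y from the interval [r, 0] (i.e. the first j ≥ 1 with Y_j ∉ [r,0]). Then E[τ] = ∑_{ℓ=0}^∞ P(Y_j ∈ [r,0] for all j ≤ ℓ) < ∞, and moreover E[τ] = O(|r|) as r → −∞; in particular ∑_{ℓ≥1} P(Y_j ∈ [r,0] for all 1 ≤ j ≤ ℓ) ≤ C·|r| for some universal constant C and all r ≤ −1. -/
open MeasureTheory ProbabilityTheory Real
open scoped ENNReal

namespace Stmt19Aux

lemma mono_exp_integrable (k : ℕ) {c : ℝ} (hc : 0 ≤ c) :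
    IntegrableOn (fun y : ℝ => y ^ k * Real.exp (-y)) (Set.Ioi c) := by
  have h := Real.GammaIntegral_convergent (s := (k : ℝ) + 1) (by positivity)
  have h2 : IntegrableOn (fun y : ℝ => y ^ k * Real.exp (-y)) (Set.Ioi 0) := by
    refine (h.congr_fun ?_ measurableSet_Ioi)
    intro y hy
    simp only [add_sub_cancel_right, Real.rpow_natCast]
    ring
  exact h2.mono_set (Set.Ioi_subset_Ioi hc)

lemma quad_exp_integrable (A B C : ℝ) {c : ℝ} (hc : 0 ≤ c) :
    IntegrableOn (fun y : ℝ => (A * y ^ 2 + B * y + C) * Real.exp (-y)) (Set.Ioi c) := by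
  have h : IntegrableOn (fun y : ℝ => A * (y ^ 2 * Real.exp (-y)) + B * (y ^ 1 * Real.exp (-y))
      + C * (y ^ 0 * Real.exp (-y))) (Set.Ioi c) :=
    (((mono_exp_integrable 2 hc).const_mul A).add
      ((mono_exp_integrable 1 hc).const_mul B)).add ((mono_exp_integrable 0 hc).const_mul C)
  exact h.congr_fun (fun y _ => by ring) measurableSet_Ioi

lemma quad_exp_integral (A B C : ℝ) {c : ℝ} (hc : 0 ≤ c) :
    ∫ y in Set.Ioi c, (A * y ^ 2 + B * y + C) * Real.exp (-y)
      = (A * c ^ 2 + (B + 2 * A) * c + (2 * A + B + C)) * Real.exp (-c) := by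
  set F : ℝ → ℝ := fun y => -((A * y ^ 2 + (B + 2 * A) * y + (2 * A + B + C)) * Real.exp (-y))
    with hF
  have hderiv : ∀ y ∈ Set.Ici c, HasDerivAt F ((A * y ^ 2 + B * y + C) * Real.exp (-y)) y := by
    intro y _
    have hexp : HasDerivAt (fun y : ℝ => Real.exp (-y)) (-Real.exp (-y)) y := by
      simpa [Function.comp_def] using (Real.hasDerivAt_exp (-y)).comp y (hasDerivAt_neg y)
    have hpoly : HasDerivAt (fun y : ℝ => A * y ^ 2 + (B + 2 * A) * y + (2 * A + B + C))
        (A * (2 * y) + (B + 2 * A)) y := by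
      have h1 := (hasDerivAt_pow 2 y).const_mul A
      have h2 := (hasDerivAt_id y).const_mul (B + 2 * A)
      have h3 := (h1.add h2).add_const (2 * A + B + C)
      exact h3.congr_deriv (by norm_num)
    have := (hpoly.mul hexp).neg
    exact this.congr_deriv (by ring)
  have htends : Filter.Tendsto F Filter.atTop (nhds 0) := by
    have h2 := tendsto_pow_mul_exp_neg_atTop_nhds_zero 2
    have h1 := tendsto_pow_mul_exp_neg_atTop_nhds_zero 1
    have h0 := tendsto_pow_mul_exp_neg_atTop_nhds_zero 0
    have := (((h2.const_mul A).add (h1.const_mul (B + 2 * A))).add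
        (h0.const_mul (2 * A + B + C))).neg
    simp only [mul_zero, add_zero, neg_zero] at this
    refine this.congr (fun y => ?_)
    simp only [hF, pow_one, pow_zero, one_mul]
    ring
  have := integral_Ioi_of_hasDerivAt_of_tendsto' hderiv (quad_exp_integrable A B C hc) htends
  rw [this]
  simp only [hF]
  ring





noncomputable def phi (r u : ℝ) : ℝ := (u - r + 1) * ((3 - r) / (2 - r) - u)

lemma phi_measurable (r : ℝ) : Measurable (phi r) := by
  unfold phi; fun_prop

lemma two_sub_pos {r : ℝ} (hr : r < 0) : (0:ℝ) < 2 - r := by linarith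

lemma a_pos {r : ℝ} (hr : r < 0) : 0 < (3 - r) / (2 - r) := by
  apply div_pos <;> linarith

lemma phi_nonneg {r u : ℝ} (hr : r < 0) (h1 : r - 1 ≤ u) (h2 : u ≤ 0) : 0 ≤ phi r u := by
  have := a_pos hr
  unfold phi
  nlinarith

lemma ind_nonneg {r : ℝ} (hr : r < 0) (z : ℝ) :
    0 ≤ (Set.Icc r 0).indicator (phi r) z := by
  rw [Set.indicator_apply]
  split_ifs with h
  · exact phi_nonneg hr (by linarith [h.1]) h.2
  · exact le_refl 0

lemma ind_le {r : ℝ} (hr : r < 0) (z : ℝ) :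
    (Set.Icc r 0).indicator (phi r) z ≤ (1 - r) * ((3 - r) / (2 - r) - r) := by
  have ha := a_pos hr
  rw [Set.indicator_apply]
  split_ifs with h
  · obtain ⟨h1, h2⟩ := h
    unfold phi
    have e1 : 0 ≤ z - r := by linarith
    nlinarith
  · nlinarith

lemma key_meas0 {r x : ℝ} : Measurable fun y : ℝ =>
    Real.exp (-y) * (Set.Icc r 0).indicator (phi r) (x + y - 1) := by
  have h1 : Measurable ((Set.Icc r 0).indicator (phi r)) :=
    (phi_measurable r).indicator measurableSet_Icc
  fun_prop

lemma key_intgr {r : ℝ} {x : ℝ} (hr : r < 0) : IntegrableOn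
    (fun y => Real.exp (-y) * (Set.Icc r 0).indicator (phi r) (x + y - 1))
    (Set.Ioi (0:ℝ)) := by
  have hintM0 : IntegrableOn
      (fun y : ℝ => ((1 - r) * ((3 - r) / (2 - r) - r)) * (y ^ 0 * Real.exp (-y)))
      (Set.Ioi (0:ℝ)) :=
    (mono_exp_integrable 0 (le_refl (0:ℝ))).const_mul _
  have hintM : IntegrableOn
      (fun y : ℝ => ((1 - r) * ((3 - r) / (2 - r) - r)) * Real.exp (-y))
      (Set.Ioi (0:ℝ)) := hintM0.congr_fun (fun y _ => by ring) measurableSet_Ioi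
  refine hintM.mono' key_meas0.aestronglyMeasurable ?_
  refine Filter.Eventually.of_forall (fun y => ?_)
  have h0 := ind_nonneg hr (x + y - 1)
  have hle := ind_le hr (x + y - 1)
  rw [Real.norm_eq_abs, abs_of_nonneg (mul_nonneg (exp_nonneg _) h0)]
  have h2 : Real.exp (-y) * (Set.Icc r 0).indicator (phi r) (x + y - 1)
      ≤ Real.exp (-y) * ((1 - r) * ((3 - r) / (2 - r) - r)) :=
    mul_le_mul_of_nonneg_left hle (exp_nonneg _)
  linarith [h2]

lemma key_real {r x : ℝ} (hr : r < 0) (hx : x ∈ Set.Icc r 0) :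
    ∫ y in Set.Ioi (0:ℝ), Real.exp (-y) * (Set.Icc r 0).indicator (phi r) (x + y - 1)
      ≤ phi r x - 1 := by
  obtain ⟨hxr, hx0⟩ := hx
  have h2r := two_sub_pos hr
  have ha := a_pos hr
  set a : ℝ := (3 - r) / (2 - r) with hadef
  set B : ℝ := a + r + 1 - 2 * x with hBdef
  set C : ℝ := phi r (x - 1) with hCdef
  have hc1 : (0:ℝ) ≤ 1 - x := by linarith
  have hquad : ∀ y : ℝ, phi r (x + y - 1) = (-1) * y ^ 2 + B * y + C := by
    intro y; simp only [hBdef, hCdef, phi]; ring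
  set g1 : ℝ → ℝ := fun y => ((-1) * y ^ 2 + B * y + C) * Real.exp (-y) with hg1
  -- integral identities
  have I1 : ∫ y in Set.Ioi (0:ℝ), g1 y = B + C - 2 := by
    rw [quad_exp_integral (-1) B C (le_refl 0)]
    norm_num
    ring
  have I3 : ∫ y in Set.Ioi (1 - x), g1 y = 0 := by
    rw [quad_exp_integral (-1) B C hc1]
    have hcoef : (-1) * (1-x) ^ 2 + (B + 2 * (-1)) * (1-x) + (2 * (-1) + B + C)
        = a * (2 - r) + (r - 3) := by
      simp only [hBdef, hCdef, phi]; ring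
    have ha2 : a * (2 - r) = 3 - r := div_mul_cancel₀ _ (ne_of_gt h2r)
    rw [hcoef, ha2]
    ring_nf
  have hBC : B + C - 2 = phi r x - 1 := by
    simp only [hBdef, hCdef, phi]; ring
  -- integrabilities
  have hint1 : IntegrableOn g1 (Set.Ioi (0:ℝ)) := quad_exp_integrable (-1) B C (le_refl 0)
  have hint3 : IntegrableOn g1 (Set.Ioi (1 - x)) := quad_exp_integrable (-1) B C hc1
  have hintInd : IntegrableOn (fun y => (Set.Ioi (1-x)).indicator g1 y) (Set.Ioi (0:ℝ)) := by
    have : Set.Ioi (1 - x) ∩ Set.Ioi (0:ℝ) = Set.Ioi (1 - x) := by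
      rw [Set.Ioi_inter_Ioi, max_eq_left hc1]
    refine (integrable_indicator_iff measurableSet_Ioi).2 ?_
    rw [IntegrableOn, Measure.restrict_restrict measurableSet_Ioi, this]
    exact hint3
  have hintRHS : IntegrableOn (fun y => g1 y - (Set.Ioi (1-x)).indicator g1 y)
      (Set.Ioi (0:ℝ)) := hint1.sub hintInd
  have hintH : IntegrableOn
      (fun y => Real.exp (-y) * (Set.Icc r 0).indicator (phi r) (x + y - 1))
      (Set.Ioi (0:ℝ)) := key_intgr hr
  -- pointwise inequality on Ioi 0
  have hpt : ∀ y ∈ Set.Ioi (0:ℝ),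
      Real.exp (-y) * (Set.Icc r 0).indicator (phi r) (x + y - 1)
        ≤ g1 y - (Set.Ioi (1-x)).indicator g1 y := by
    intro y hy
    rw [Set.mem_Ioi] at hy
    by_cases hcase : y ≤ 1 - x
    · have hz : x + y - 1 ≤ 0 := by linarith
      have hind3 : (Set.Ioi (1-x)).indicator g1 y = 0 := by
        apply Set.indicator_of_notMem
        simpa using hcase
      have hg1y : g1 y = phi r (x + y - 1) * Real.exp (-y) := by
        simp only [hg1]
        rw [hquad y]
      rw [hind3, sub_zero, hg1y, Set.indicator_apply]
      split_ifs with hmem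
      · exact le_of_eq (by ring)
      · have hphi0 : 0 ≤ phi r (x + y - 1) := phi_nonneg hr (by linarith) hz
        simpa using mul_nonneg hphi0 (exp_nonneg (-y))
    · push_neg at hcase
      have hz : 0 < x + y - 1 := by linarith
      have hind3 : (Set.Ioi (1-x)).indicator g1 y = g1 y :=
        Set.indicator_of_mem (by simpa using hcase) g1
      have hindIcc : (Set.Icc r 0).indicator (phi r) (x + y - 1) = 0 := by
        apply Set.indicator_of_notMem
        intro hmem
        exact absurd hmem.2 (by linarith)
      rw [hind3, hindIcc, mul_zero, sub_self]
  calc ∫ y in Set.Ioi (0:ℝ), Real.exp (-y) * (Set.Icc r 0).indicator (phi r) (x + y - 1)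
      ≤ ∫ y in Set.Ioi (0:ℝ), (g1 y - (Set.Ioi (1-x)).indicator g1 y) := by
        exact setIntegral_mono_on hintH hintRHS measurableSet_Ioi hpt
    _ = (∫ y in Set.Ioi (0:ℝ), g1 y) - ∫ y in Set.Ioi (0:ℝ), (Set.Ioi (1-x)).indicator g1 y :=
        integral_sub hint1 hintInd
    _ = (B + C - 2) - ∫ y in Set.Ioi (1-x), g1 y := by
        rw [I1, integral_indicator measurableSet_Ioi,
          Measure.restrict_restrict measurableSet_Ioi, Set.Ioi_inter_Ioi, max_eq_left hc1]
    _ = phi r x - 1 := by rw [I3, hBC]; ring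

lemma key_meas {r x : ℝ} : Measurable fun y : ℝ =>
    Real.exp (-y) * (Set.Icc r 0).indicator (phi r) (x + y - 1) := by
  have h1 : Measurable ((Set.Icc r 0).indicator (phi r)) :=
    (phi_measurable r).indicator measurableSet_Icc
  fun_prop

lemma gammaPDFReal_one_one (y : ℝ) :
    gammaPDFReal 1 1 y = if 0 ≤ y then Real.exp (-y) else 0 := by
  unfold gammaPDFReal
  simp [Real.Gamma_one]

lemma inner_bound {r x : ℝ} (hr : r < 0) (hx : x ∈ Set.Icc r 0) :
    (∫⁻ y, ENNReal.ofReal ((Set.Icc r 0).indicator (phi r) (x + y - 1)) ∂(expMeasure 1)) + 1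
      ≤ ENNReal.ofReal (phi r x) := by
  have hmeasg : Measurable fun y : ℝ =>
      ENNReal.ofReal ((Set.Icc r 0).indicator (phi r) (x + y - 1)) := by
    have h1 : Measurable ((Set.Icc r 0).indicator (phi r)) :=
      (phi_measurable r).indicator measurableSet_Icc
    fun_prop
  have hmeaspdf : Measurable (gammaPDF 1 1) :=
    ENNReal.measurable_ofReal.comp (measurable_gammaPDFReal 1 1)
  have h1 : (∫⁻ y, ENNReal.ofReal ((Set.Icc r 0).indicator (phi r) (x + y - 1))
        ∂(expMeasure 1))
      = ∫⁻ y, ENNReal.ofReal (gammaPDFReal 1 1 y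
          * (Set.Icc r 0).indicator (phi r) (x + y - 1)) ∂volume := by
    rw [expMeasure, gammaMeasure, lintegral_withDensity_eq_lintegral_mul _ hmeaspdf hmeasg]
    refine lintegral_congr (fun y => ?_)
    simp only [Pi.mul_apply, gammaPDF]
    rw [ENNReal.ofReal_mul (gammaPDFReal_nonneg zero_lt_one one_pos y)]
  set G : ℝ → ℝ := fun y =>
    gammaPDFReal 1 1 y * (Set.Icc r 0).indicator (phi r) (x + y - 1) with hG
  have hGeq : G = Set.indicator (Set.Ici 0)
      (fun y => Real.exp (-y) * (Set.Icc r 0).indicator (phi r) (x + y - 1)) := by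
    funext y
    simp only [hG, gammaPDFReal_one_one, Set.indicator_apply, Set.mem_Ici]
    split_ifs <;> ring
  have hGint : Integrable G volume := by
    rw [hGeq, integrable_indicator_iff measurableSet_Ici,
      integrableOn_Ici_iff_integrableOn_Ioi]
    exact key_intgr hr
  have hGnn : 0 ≤ᵐ[volume] G := by
    refine Filter.Eventually.of_forall (fun y => ?_)
    exact mul_nonneg (gammaPDFReal_nonneg zero_lt_one one_pos y) (ind_nonneg hr _)
  have h2 : ∫⁻ y, ENNReal.ofReal (G y) ∂volume = ENNReal.ofReal (∫ y, G y ∂volume) :=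
    (ofReal_integral_eq_lintegral_ofReal hGint hGnn).symm
  have h3 : ∫ y, G y ∂volume
      = ∫ y in Set.Ioi (0:ℝ), Real.exp (-y) * (Set.Icc r 0).indicator (phi r) (x + y - 1) := by
    rw [hGeq, integral_indicator measurableSet_Ici, ← integral_Ici_eq_integral_Ioi]
  have h4 : (0:ℝ) ≤ ∫ y, G y ∂volume := integral_nonneg_of_ae hGnn
  have h5 := key_real hr hx
  rw [h1, h2, h3]
  calc ENNReal.ofReal (∫ y in Set.Ioi (0:ℝ),
          Real.exp (-y) * (Set.Icc r 0).indicator (phi r) (x + y - 1)) + 1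
      = ENNReal.ofReal ((∫ y in Set.Ioi (0:ℝ),
          Real.exp (-y) * (Set.Icc r 0).indicator (phi r) (x + y - 1)) + 1) := by
        rw [ENNReal.ofReal_add (by rw [← h3]; exact h4) zero_le_one, ENNReal.ofReal_one]
    _ ≤ ENNReal.ofReal (phi r x) := by
        apply ENNReal.ofReal_le_ofReal
        linarith
noncomputable def Sf (n j : ℕ) (v : Fin n → ℝ) : ℝ :=
  ∑ i ∈ Finset.range j, ((if h : i < n then v ⟨i, h⟩ else 0) - 1)

lemma Sf_measurable (n j : ℕ) : Measurable (Sf n j) := by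
  apply Finset.measurable_sum
  intro i _
  refine Measurable.sub ?_ measurable_const
  by_cases h : i < n
  · simp only [dif_pos h]
    exact measurable_pi_apply _
  · simp only [dif_neg h]
    exact measurable_const

def staySet (r : ℝ) (n : ℕ) : Set (Fin n → ℝ) :=
  {v | ∀ j, 1 ≤ j → j ≤ n → Sf n j v ∈ Set.Icc r 0}

lemma staySet_measurable (r : ℝ) (n : ℕ) : MeasurableSet (staySet r n) := by
  have h : staySet r n
      = ⋂ (j : ℕ), ⋂ (_ : 1 ≤ j), ⋂ (_ : j ≤ n), Sf n j ⁻¹' (Set.Icc r 0) := by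
    ext v; simp [staySet]
  rw [h]
  exact MeasurableSet.iInter fun j => MeasurableSet.iInter fun _ =>
    MeasurableSet.iInter fun _ => (Sf_measurable n j) measurableSet_Icc

lemma main_est {Ω : Type*} [MeasurableSpace Ω] (μ : Measure Ω) [IsProbabilityMeasure μ]
    (ξ : ℕ → Ω → ℝ) (hmeas : ∀ i, Measurable (ξ i))
    (hindep : iIndepFun ξ μ)
    (hlaw : ∀ i, μ.map (ξ i) = expMeasure 1)
    (Y : ℕ → Ω → ℝ) (hY : ∀ j ω, Y j ω = ∑ i ∈ Finset.range j, (ξ i ω - 1))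
    {r : ℝ} (hr : r < 0) :
    ∑' n : ℕ, μ {ω | ∀ j, 1 ≤ j → j ≤ n → Y j ω ∈ Set.Icc r 0}
      ≤ ENNReal.ofReal (phi r 0) := by
  haveI hPexp : IsProbabilityMeasure (expMeasure 1) := isProbabilityMeasure_expMeasure one_pos
  set stay : ℕ → Set Ω := fun n => {ω | ∀ j, 1 ≤ j → j ≤ n → Y j ω ∈ Set.Icc r 0} with hstaydef
  set T : (n : ℕ) → Ω → (Fin n → ℝ) := fun n ω i => ξ i ω with hTdef
  have hTmeas : ∀ n, Measurable (T n) := fun n => measurable_pi_lambda _ fun i => hmeas i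
  have hSfY : ∀ n j, j ≤ n → ∀ ω, Sf n j (T n ω) = Y j ω := by
    intro n j hj ω
    rw [hY]
    refine Finset.sum_congr rfl (fun i hi => ?_)
    rw [Finset.mem_range] at hi
    rw [dif_pos (lt_of_lt_of_le hi hj)]
  have hstayT : ∀ n, stay n = T n ⁻¹' (staySet r n) := by
    intro n
    ext ω
    simp only [hstaydef, Set.mem_setOf_eq, Set.mem_preimage, staySet]
    constructor
    · intro h j h1 h2
      rw [hSfY n j h2]
      exact h j h1 h2
    · intro h j h1 h2
      rw [← hSfY n j h2]
      exact h j h1 h2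
  have hstaymeas : ∀ n, MeasurableSet (stay n) := fun n =>
    (hstayT n) ▸ (hTmeas n) (staySet_measurable r n)
  -- joint law
  have hpairlaw : ∀ n, μ.map (fun ω => (T n ω, ξ n ω)) = (μ.map (T n)).prod (expMeasure 1) := by
    intro n
    have hdisj : Disjoint (Finset.range n) ({n} : Finset ℕ) := by
      simp [Finset.disjoint_singleton_right]
    have h := hindep.indepFun_finset (Finset.range n) {n} hdisj hmeas
    have hφ : Measurable fun (v : (i : ↥(Finset.range n)) → ℝ) (i : Fin n) =>
        v ⟨(i : ℕ), Finset.mem_range.mpr i.2⟩ :=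
      measurable_pi_lambda _ fun i => measurable_pi_apply _
    have hψ : Measurable fun (w : (i : ↥({n} : Finset ℕ)) → ℝ) =>
        w ⟨n, Finset.mem_singleton_self n⟩ := measurable_pi_apply _
    have h2 := h.comp hφ hψ
    have hind : IndepFun (T n) (ξ n) μ := h2
    rw [← hlaw n]
    exact (indepFun_iff_map_prod_eq_prod_map_map (hTmeas n).aemeasurable
      (hmeas n).aemeasurable).mp hind
  -- potential sequence
  set e : ℕ → ℝ≥0∞ := fun n =>
    ∫⁻ ω, (stay n).indicator (fun _ => (1:ℝ≥0∞)) ω * ENNReal.ofReal (phi r (Y n ω)) ∂μ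
    with hedef
  have hstep : ∀ n, e (n + 1) + μ (stay n) ≤ e n := by
    intro n
    set ν : Measure (Fin n → ℝ) := μ.map (T n) with hνdef
    haveI : IsProbabilityMeasure ν := Measure.isProbabilityMeasure_map (hTmeas n).aemeasurable
    set inS : (Fin n → ℝ) → ℝ≥0∞ := fun v => (staySet r n).indicator (fun _ => (1:ℝ≥0∞)) v
      with hinSdef
    have hinSmeas : Measurable inS := measurable_const.indicator (staySet_measurable r n)
    have hphiY : ∀ m, Measurable fun ω => ENNReal.ofReal (phi r (Y m ω)) := by
      intro m
      have hYm : Measurable (Y m) := by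
        have h : Y m = fun ω => ∑ i ∈ Finset.range m, (ξ i ω - 1) := funext fun ω => hY m ω
        rw [h]
        exact Finset.measurable_sum _ fun i _ => (hmeas i).sub measurable_const
      exact ENNReal.measurable_ofReal.comp ((phi_measurable r).comp hYm)
    have h_en : e n = ∫⁻ v, inS v * ENNReal.ofReal (phi r (Sf n n v)) ∂ν := by
      have hfmeas : Measurable fun v : Fin n → ℝ =>
          inS v * ENNReal.ofReal (phi r (Sf n n v)) :=
        hinSmeas.mul (ENNReal.measurable_ofReal.comp
          ((phi_measurable r).comp (Sf_measurable n n)))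
      rw [hνdef, lintegral_map hfmeas (hTmeas n)]
      refine lintegral_congr fun ω => ?_
      rw [hSfY n n le_rfl ω]
      congr 1
      rw [hstayT n]
      by_cases h : T n ω ∈ staySet r n <;>
        simp [Set.indicator_apply, Set.mem_preimage, h, hinSdef]
    have h_mu : μ (stay n) = ∫⁻ v, inS v ∂ν := by
      rw [hstayT n, ← Measure.map_apply (hTmeas n) (staySet_measurable r n), ← hνdef,
        ← lintegral_indicator_one (staySet_measurable r n)]
      rfl
    set F : (Fin n → ℝ) × ℝ → ℝ≥0∞ := fun p =>
      inS p.1 * ENNReal.ofReal ((Set.Icc r 0).indicator (phi r) (Sf n n p.1 + p.2 - 1))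
      with hFdef
    have hFmeas : Measurable F := by
      apply Measurable.mul
      · exact hinSmeas.comp measurable_fst
      · refine ENNReal.measurable_ofReal.comp ?_
        refine ((phi_measurable r).indicator measurableSet_Icc).comp ?_
        exact (((Sf_measurable n n).comp measurable_fst).add measurable_snd).sub
          measurable_const
    have hstaymono : stay (n + 1) ⊆ stay n := fun ω h j h1 h2 => h j h1 (h2.trans n.le_succ)
    have hYsucc : ∀ ω, Y (n + 1) ω = Sf n n (T n ω) + ξ n ω - 1 := by
      intro ω
      rw [hSfY n n le_rfl ω, hY (n+1), hY n, Finset.sum_range_succ]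
      ring
    have h_point : ∀ ω, (stay (n+1)).indicator (fun _ => (1:ℝ≥0∞)) ω
        * ENNReal.ofReal (phi r (Y (n+1) ω)) = F (T n ω, ξ n ω) := by
      intro ω
      by_cases h1 : T n ω ∈ staySet r n
      · by_cases h2 : Y (n+1) ω ∈ Set.Icc r 0
        · have hmem : ω ∈ stay (n+1) := by
            intro j hj1 hj2
            rcases Nat.lt_succ_iff_lt_or_eq.mp (Nat.lt_succ_of_le hj2) with h | h
            · have := h1 j hj1 (by omega)
              rwa [hSfY n j (by omega) ω] at this
            · subst h; exact h2
          simp only [hFdef, hinSdef]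
          rw [Set.indicator_of_mem hmem, Set.indicator_of_mem h1 (fun _ => (1:ℝ≥0∞)),
            ← hYsucc ω, Set.indicator_of_mem h2]
        · have hnmem : ω ∉ stay (n+1) := fun h => h2 (h (n+1) (by omega) le_rfl)
          simp only [hFdef, hinSdef]
          rw [Set.indicator_of_notMem hnmem, Set.indicator_of_mem h1 (fun _ => (1:ℝ≥0∞)),
            ← hYsucc ω, Set.indicator_of_notMem h2]
          simp
      · have hnmem : ω ∉ stay (n+1) := by
          intro h
          apply h1
          rw [hstayT n] at *
          exact hstaymono h
        simp only [hFdef, hinSdef]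
        rw [Set.indicator_of_notMem hnmem, Set.indicator_of_notMem h1]
        simp
    have h_esucc : e (n + 1) = ∫⁻ v, (∫⁻ y, F (v, y) ∂(expMeasure 1)) ∂ν := by
      calc e (n + 1) = ∫⁻ ω, F (T n ω, ξ n ω) ∂μ := lintegral_congr h_point
        _ = ∫⁻ p, F p ∂(μ.map (fun ω => (T n ω, ξ n ω))) :=
            (lintegral_map hFmeas ((hTmeas n).prodMk (hmeas n))).symm
        _ = ∫⁻ p, F p ∂(ν.prod (expMeasure 1)) := by rw [hpairlaw n, hνdef]
        _ = ∫⁻ v, (∫⁻ y, F (v, y) ∂(expMeasure 1)) ∂ν := lintegral_prod F hFmeas.aemeasurable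
    have h_inner : ∀ v, (∫⁻ y, F (v, y) ∂(expMeasure 1)) + inS v
        ≤ inS v * ENNReal.ofReal (phi r (Sf n n v)) := by
      intro v
      by_cases hv : v ∈ staySet r n
      · have hx : Sf n n v ∈ Set.Icc r 0 := by
          cases n with
          | zero =>
            simp only [Sf, Finset.range_zero, Finset.sum_empty]
            exact ⟨hr.le, le_rfl⟩
          | succ m => exact hv (m+1) (Nat.succ_le_succ (Nat.zero_le m)) le_rfl
        have hb := inner_bound hr hx
        simp only [hFdef, hinSdef]
        rw [Set.indicator_of_mem hv (fun _ => (1:ℝ≥0∞))]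
        simp only [one_mul]
        exact hb
      · simp only [hFdef, hinSdef, Set.indicator_of_notMem hv, zero_mul, lintegral_zero,
          add_zero, zero_add]
        exact le_rfl
    have hinnermeas : Measurable fun v => ∫⁻ y, F (v, y) ∂(expMeasure 1) :=
      hFmeas.lintegral_prod_right'
    calc e (n + 1) + μ (stay n)
        = (∫⁻ v, (∫⁻ y, F (v, y) ∂(expMeasure 1)) ∂ν) + ∫⁻ v, inS v ∂ν := by
          rw [h_esucc, h_mu]
      _ = ∫⁻ v, ((∫⁻ y, F (v, y) ∂(expMeasure 1)) + inS v) ∂ν :=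
          (lintegral_add_left hinnermeas _).symm
      _ ≤ ∫⁻ v, inS v * ENNReal.ofReal (phi r (Sf n n v)) ∂ν := lintegral_mono h_inner
      _ = e n := h_en.symm
  have h_e0 : e 0 = ENNReal.ofReal (phi r 0) := by
    have h1 : stay 0 = Set.univ := by
      ext ω
      simp only [hstaydef, Set.mem_setOf_eq, Set.mem_univ, iff_true]
      intro j h1 h2
      omega
    have h2 : ∀ ω, Y 0 ω = 0 := fun ω => by rw [hY]; simp
    simp only [hedef, h1, Set.indicator_univ, h2, one_mul]
    rw [lintegral_const]
    simp
  have h_sum : ∀ N, (∑ k ∈ Finset.range N, μ (stay k)) + e N ≤ e 0 := by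
    intro N
    induction N with
    | zero => simp
    | succ N ih =>
      rw [Finset.sum_range_succ]
      calc (∑ k ∈ Finset.range N, μ (stay k)) + μ (stay N) + e (N+1)
          = (∑ k ∈ Finset.range N, μ (stay k)) + (e (N+1) + μ (stay N)) := by ring
        _ ≤ (∑ k ∈ Finset.range N, μ (stay k)) + e N := add_le_add_right (hstep N) _
        _ ≤ e 0 := ih
  have h_tsum : ∑' n, μ (stay n) ≤ e 0 := by
    rw [ENNReal.tsum_eq_iSup_sum]
    refine iSup_le fun s => ?_
    obtain ⟨N, hN⟩ := Finset.exists_nat_subset_range s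
    calc ∑ k ∈ s, μ (stay k) ≤ ∑ k ∈ Finset.range N, μ (stay k) :=
          Finset.sum_le_sum_of_subset hN
      _ ≤ e 0 := le_trans le_self_add (h_sum N)
  rw [← h_e0]
  exact h_tsum

end Stmt19Aux

/-- Exit time of the centered walk `Y` (steps `Exp(1) − 1`, started at `0`) from `[r, 0]`,
`r < 0`: letting `τ` be the first time `j ≥ 1` with `Y_j ∉ [r,0]`, one has
`E[τ] = ∑_{ℓ≥0} P(Y_j ∈ [r,0] ∀ j ≤ ℓ) < ∞`; moreover there is a universal constant `C > 0`
with `∑_{ℓ≥1} P(Y_j ∈ [r,0] ∀ 1 ≤ j ≤ ℓ) ≤ C·|r|` for all `r ≤ −1`. -/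
theorem stmt19 {Ω : Type*} [MeasurableSpace Ω] (μ : Measure Ω) [IsProbabilityMeasure μ]
    (ξ : ℕ → Ω → ℝ) (hmeas : ∀ i, Measurable (ξ i))
    (hindep : iIndepFun ξ μ)
    (hlaw : ∀ i, μ.map (ξ i) = expMeasure 1)
    (Y : ℕ → Ω → ℝ) (hY : ∀ j ω, Y j ω = ∑ i ∈ Finset.range j, (ξ i ω - 1)) :
    (∀ r : ℝ, r < 0 →
      (∫⁻ ω, ((sInf {j : ℕ | 1 ≤ j ∧ Y j ω ∉ Set.Icc r 0} : ℕ) : ℝ≥0∞) ∂μ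
          = ∑' ℓ : ℕ, μ {ω | ∀ j ≤ ℓ, Y j ω ∈ Set.Icc r 0})
      ∧ (∑' ℓ : ℕ, μ {ω | ∀ j ≤ ℓ, Y j ω ∈ Set.Icc r 0}) < ⊤)
    ∧ ∃ C : ℝ, 0 < C ∧ ∀ r : ℝ, r ≤ -1 →
        ∑' ℓ : ℕ, μ {ω | ∀ j : ℕ, 1 ≤ j → j ≤ ℓ + 1 → Y j ω ∈ Set.Icc r 0}
          ≤ ENNReal.ofReal (C * |r|) := by
  classical
  have hYmeas : ∀ j, Measurable (Y j) := by
    intro j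
    have h : Y j = fun ω => ∑ i ∈ Finset.range j, (ξ i ω - 1) := funext fun ω => hY j ω
    rw [h]
    exact Finset.measurable_sum _ fun i _ => (hmeas i).sub measurable_const
  constructor
  · intro r hr
    have hmain := Stmt19Aux.main_est μ ξ hmeas hindep hlaw Y hY hr
    set stay : ℕ → Set Ω := fun n => {ω | ∀ j, 1 ≤ j → j ≤ n → Y j ω ∈ Set.Icc r 0}
      with hstaydef
    have hstaymeas : ∀ n, MeasurableSet (stay n) := by
      intro n
      have h : stay n = ⋂ (j : ℕ), ⋂ (_ : 1 ≤ j), ⋂ (_ : j ≤ n), Y j ⁻¹' (Set.Icc r 0) := by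
        ext ω; simp [hstaydef]
      rw [h]
      exact MeasurableSet.iInter fun j => MeasurableSet.iInter fun _ =>
        MeasurableSet.iInter fun _ => (hYmeas j) measurableSet_Icc
    have hsetEq : ∀ ℓ : ℕ, {ω | ∀ j ≤ ℓ, Y j ω ∈ Set.Icc r 0} = stay ℓ := by
      intro ℓ
      ext ω
      simp only [hstaydef, Set.mem_setOf_eq]
      constructor
      · intro h j _ h2
        exact h j h2
      · intro h j hj
        rcases Nat.eq_zero_or_pos j with h0 | h0
        · subst h0
          rw [hY]
          simp only [Finset.range_zero, Finset.sum_empty]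
          exact ⟨hr.le, le_rfl⟩
        · exact h j h0 hj
    have hfin : ∑' ℓ, μ (stay ℓ) < ⊤ := lt_of_le_of_lt hmain ENNReal.ofReal_lt_top
    set E : Set Ω := ⋃ (j : ℕ), ⋃ (_ : 1 ≤ j), (Y j ⁻¹' (Set.Icc r 0))ᶜ with hEdef
    have hEmeas : MeasurableSet E :=
      MeasurableSet.iUnion fun j => MeasurableSet.iUnion fun _ =>
        ((hYmeas j) measurableSet_Icc).compl
    have hEmem : ∀ ω, ω ∈ E ↔ ∃ j, 1 ≤ j ∧ Y j ω ∉ Set.Icc r 0 := by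
      intro ω
      simp [hEdef]
    have hτ : ∀ (ℓ : ℕ) (ω : Ω),
        (ℓ < sInf {j : ℕ | 1 ≤ j ∧ Y j ω ∉ Set.Icc r 0}) ↔ ω ∈ E ∩ stay ℓ := by
      intro ℓ ω
      by_cases hS : {j : ℕ | 1 ≤ j ∧ Y j ω ∉ Set.Icc r 0}.Nonempty
      · have hmem := Nat.sInf_mem hS
        constructor
        · intro hlt
          refine ⟨(hEmem ω).2 ⟨_, hmem.1, hmem.2⟩, ?_⟩
          intro j h1 h2
          by_contra hnot
          have hjS : j ∈ {j : ℕ | 1 ≤ j ∧ Y j ω ∉ Set.Icc r 0} := ⟨h1, hnot⟩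
          have := Nat.sInf_le hjS
          omega
        · rintro ⟨_, hst⟩
          rcases lt_or_ge ℓ (sInf {j : ℕ | 1 ≤ j ∧ Y j ω ∉ Set.Icc r 0}) with h | h
          · exact h
          · exact absurd (hst _ hmem.1 h) hmem.2
      · constructor
        · intro hlt
          rw [Set.not_nonempty_iff_eq_empty] at hS
          rw [hS, Nat.sInf_empty] at hlt
          omega
        · rintro ⟨hE, _⟩
          obtain ⟨j, h1, h2⟩ := (hEmem ω).1 hE
          exact (hS ⟨j, h1, h2⟩).elim
    have hEc : μ Eᶜ = 0 := by
      have hsub : ∀ m, Eᶜ ⊆ stay m := by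
        intro m ω hω j h1 _
        by_contra hnot
        exact hω ((hEmem ω).2 ⟨j, h1, hnot⟩)
      by_contra hne
      have hc : ∀ m : ℕ, μ Eᶜ ≤ μ (stay m) := fun m => measure_mono (hsub m)
      have hle : (∑' _ : ℕ, μ Eᶜ) ≤ ∑' m, μ (stay m) := ENNReal.tsum_le_tsum hc
      rw [ENNReal.tsum_const_eq_top_of_ne_zero hne] at hle
      exact absurd (lt_of_le_of_lt hle hfin) (lt_irrefl ⊤)
    have hind : ∀ ℓ, MeasurableSet (E ∩ stay ℓ) := fun ℓ => hEmeas.inter (hstaymeas ℓ)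
    have hμEq : ∀ ℓ, μ (E ∩ stay ℓ) = μ (stay ℓ) := by
      intro ℓ
      have h1 : μ (stay ℓ ∩ E) + μ (stay ℓ \ E) = μ (stay ℓ) := measure_inter_add_diff _ hEmeas
      have h2 : μ (stay ℓ \ E) = 0 :=
        measure_mono_null (fun ω h => h.2) hEc
      rw [h2, add_zero] at h1
      rw [Set.inter_comm]
      exact h1
    have hnat : ∀ n : ℕ, (n : ℝ≥0∞) = ∑' ℓ : ℕ, (if ℓ < n then (1:ℝ≥0∞) else 0) := by
      intro n
      rw [tsum_eq_sum (s := Finset.range n)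
        (fun ℓ hℓ => if_neg (by rw [Finset.mem_range] at hℓ; omega))]
      rw [Finset.sum_congr rfl (fun ℓ hℓ => if_pos (Finset.mem_range.1 hℓ))]
      simp
    have hint : ∫⁻ ω, ((sInf {j : ℕ | 1 ≤ j ∧ Y j ω ∉ Set.Icc r 0} : ℕ) : ℝ≥0∞) ∂μ
        = ∑' ℓ, μ (E ∩ stay ℓ) := by
      have hpt : ∀ ω, ((sInf {j : ℕ | 1 ≤ j ∧ Y j ω ∉ Set.Icc r 0} : ℕ) : ℝ≥0∞)
          = ∑' ℓ : ℕ, (E ∩ stay ℓ).indicator (fun _ => (1:ℝ≥0∞)) ω := by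
        intro ω
        rw [hnat]
        refine tsum_congr fun ℓ => ?_
        rw [Set.indicator_apply]
        exact if_congr (hτ ℓ ω) rfl rfl
      calc ∫⁻ ω, ((sInf {j : ℕ | 1 ≤ j ∧ Y j ω ∉ Set.Icc r 0} : ℕ) : ℝ≥0∞) ∂μ
          = ∫⁻ ω, ∑' ℓ : ℕ, (E ∩ stay ℓ).indicator (fun _ => (1:ℝ≥0∞)) ω ∂μ :=
            lintegral_congr hpt
        _ = ∑' ℓ : ℕ, ∫⁻ ω, (E ∩ stay ℓ).indicator (fun _ => (1:ℝ≥0∞)) ω ∂μ :=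
            lintegral_tsum fun ℓ => (measurable_const.indicator (hind ℓ)).aemeasurable
        _ = ∑' ℓ, μ (E ∩ stay ℓ) := tsum_congr fun ℓ => lintegral_indicator_one (hind ℓ)
    constructor
    · calc ∫⁻ ω, ((sInf {j : ℕ | 1 ≤ j ∧ Y j ω ∉ Set.Icc r 0} : ℕ) : ℝ≥0∞) ∂μ
          = ∑' ℓ, μ (E ∩ stay ℓ) := hint
        _ = ∑' ℓ, μ (stay ℓ) := tsum_congr hμEq
        _ = ∑' ℓ : ℕ, μ {ω | ∀ j ≤ ℓ, Y j ω ∈ Set.Icc r 0} :=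
            tsum_congr fun ℓ => by rw [hsetEq ℓ]
    · calc ∑' ℓ : ℕ, μ {ω | ∀ j ≤ ℓ, Y j ω ∈ Set.Icc r 0}
          = ∑' ℓ, μ (stay ℓ) := tsum_congr fun ℓ => by rw [hsetEq ℓ]
        _ < ⊤ := hfin
  · refine ⟨3, by norm_num, ?_⟩
    intro r hr
    have hr0 : r < 0 := lt_of_le_of_lt hr (by norm_num)
    have hmain := Stmt19Aux.main_est μ ξ hmeas hindep hlaw Y hY hr0
    have h1 : ∑' ℓ : ℕ, μ {ω | ∀ j : ℕ, 1 ≤ j → j ≤ ℓ + 1 → Y j ω ∈ Set.Icc r 0}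
        ≤ ∑' n : ℕ, μ {ω | ∀ j, 1 ≤ j → j ≤ n → Y j ω ∈ Set.Icc r 0} := by
      refine Summable.tsum_le_tsum_of_inj (fun ℓ => ℓ + 1) (fun a b h => by simpa using h)
        (fun n _ => zero_le) (fun ℓ => le_rfl) ENNReal.summable ENNReal.summable
    refine le_trans (le_trans h1 hmain) (ENNReal.ofReal_le_ofReal ?_)
    have h2r : (0:ℝ) < 2 - r := by linarith
    have habs : |r| = -r := abs_of_neg hr0
    rw [habs]
    unfold Stmt19Aux.phi
    have hkey : (0 - r + 1) * ((3 - r) / (2 - r) - 0) = ((1 - r) * (3 - r)) / (2 - r) := by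
      rw [sub_zero, show (0 - r + 1) = (1 - r) by ring, mul_div_assoc]
    rw [hkey, div_le_iff₀ h2r]
    nlinarith [sq_nonneg (r + 1)]
end
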